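/- (Test–correct-class alignment lower bound) Assume ‖x^{(0)}‖₂ ≤ 1 and ‖x_i^{(0)}‖₂ ≤ 1 for all i. Then for every t ∈ ℕ, R_{t+1} ≥ (1+α') R_t + α'(1+α') ( p_{c*}^{(t)} ρ_t − (1 − p_{c*}^{(t)}) (1+α')^{2t} ). -/

import Mathlib

open Finset Real
set_option maxHeartbeats 1000000
open scoped RealInnerProductSpace BigOperators

/-- **Test–correct-class alignment lower bound.** -/
theorem test_correct_class_alignment_lower_bound
    (d n K : ℕ) (hK : 2 ≤ K)
    (α γ α' γ' : ℝ) (hα : 0 < α) (hγ : 0 < γ) (hα' : 0 < α') (hγ' : 0 < γ')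
    (c : Fin n → Fin K)
    (hclass : ∀ k : Fin K, ∃ i, c i = k)
    (cstar : Fin K)
    (hne : (Finset.univ.filter (fun i => c i = cstar)).Nonempty)
    (hne' : (Finset.univ.filter (fun i => c i ≠ cstar)).Nonempty)
    (hcard : (Finset.univ.filter (fun i => c i = cstar)).card < n)
    (x : ℕ → Fin n → EuclideanSpace ℝ (Fin d))
    (xt : ℕ → EuclideanSpace ℝ (Fin d))
    (yt : ℕ → Fin K → ℝ)
    (hyt0 : yt 0 = 0)
    (Atr : ℕ → Fin n → Fin n → ℝ)
    (hAtr : ∀ t j k, Atr t j k =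
      if c k = c j then
        Real.exp (α * ⟪x t j, x t k⟫) /
          ∑ s ∈ Finset.univ.filter (fun s => c s = c j), Real.exp (α * ⟪x t j, x t s⟫)
      else 0)
    (hx : ∀ t j, x (t+1) j =
      x t j + α' • ∑ k ∈ Finset.univ.filter (fun k => c k = c j), Atr t j k • x t k)
    (A : ℕ → Fin n → ℝ)
    (hA : ∀ t i, A t i =
      Real.exp (α * ⟪xt t, x t i⟫ + γ * (1 + γ') ^ t * yt t (c i)) /
        ∑ m, Real.exp (α * ⟪xt t, x t m⟫ + γ * (1 + γ') ^ t * yt t (c m)))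
    (hxt : ∀ t, xt (t+1) = xt t + α' • ∑ i, A t i • x t i)
    (hyt : ∀ t, yt (t+1) =
      yt t + α' • ∑ i, A t i • ((1 + γ') ^ t • (Pi.single (c i) (1 : ℝ) : Fin K → ℝ)))
    (p : Fin K → ℕ → ℝ)
    (hp : ∀ cc t, p cc t = ∑ j ∈ Finset.univ.filter (fun i => c i = cc), A t j)
    (R L Δ ρ Λ Γ : ℕ → ℝ)
    (hR : ∀ t, R t =
      (Finset.univ.filter (fun i => c i = cstar)).inf' hne (fun j => ⟪xt t, x t j⟫))
    (hL : ∀ t, L t =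
      (Finset.univ.filter (fun i => c i ≠ cstar)).sup' hne' (fun j => ⟪xt t, x t j⟫))
    (hΔ : ∀ t, Δ t = R t - L t)
    (hρ : ∀ t, ρ t =
      ((Finset.univ.filter (fun i => c i = cstar)) ×ˢ
          (Finset.univ.filter (fun i => c i = cstar))).inf' (hne.product hne)
        (fun q => ⟪x t q.1, x t q.2⟫))
    (hΛ : ∀ t, Λ t =
      ((Finset.univ.filter (fun i => c i = cstar)) ×ˢ
          (Finset.univ.filter (fun i => c i ≠ cstar))).sup' (hne.product hne')
        (fun q => ⟪x t q.1, x t q.2⟫))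
    (hΓ : ∀ t, Γ t = ρ t - Λ t)
    (hx0 : ‖xt 0‖ ≤ 1) (hxi0 : ∀ i, ‖x 0 i‖ ≤ 1) :
    ∀ t : ℕ,
      (1 + α') * R t +
        α' * (1 + α') * (p cstar t * ρ t - (1 - p cstar t) * (1 + α') ^ (2 * t)) ≤
      R (t + 1) := by
  have hα'0 : (0:ℝ) ≤ α' := hα'.le
  have h1α : (0:ℝ) < 1 + α' := by linarith
  have hninst : Nonempty (Fin n) := by
    obtain ⟨i, _⟩ := hne; exact ⟨i⟩
  -- A properties
  have hAden : ∀ t, 0 < ∑ m, Real.exp (α * ⟪xt t, x t m⟫ + γ * (1 + γ') ^ t * yt t (c m)) := by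
    intro t
    exact Finset.sum_pos (fun m _ => Real.exp_pos _) Finset.univ_nonempty
  have hAnn : ∀ t i, 0 ≤ A t i := by
    intro t i; rw [hA]
    exact div_nonneg (Real.exp_pos _).le (hAden t).le
  have hAsum : ∀ t, ∑ i, A t i = 1 := by
    intro t
    simp only [hA]
    rw [← Finset.sum_div, div_self (hAden t).ne']
  have hAtrden : ∀ t (j : Fin n),
      0 < ∑ s ∈ Finset.univ.filter (fun s => c s = c j), Real.exp (α * ⟪x t j, x t s⟫) := by
    intro t j
    exact Finset.sum_pos (fun s _ => Real.exp_pos _) ⟨j, by simp⟩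
  have hAtrnn : ∀ t j k, 0 ≤ Atr t j k := by
    intro t j k; rw [hAtr]
    split
    · exact div_nonneg (Real.exp_pos _).le (hAtrden t j).le
    · exact le_refl 0
  have hAtrsum : ∀ t j, ∑ k ∈ Finset.univ.filter (fun k => c k = c j), Atr t j k = 1 := by
    intro t j
    rw [Finset.sum_congr rfl (fun k hk => by
      rw [hAtr, if_pos (Finset.mem_filter.mp hk).2])]
    rw [← Finset.sum_div, div_self (hAtrden t j).ne']
  -- norm bounds
  have hxb : ∀ t i, ‖x t i‖ ≤ (1+α')^t := by
    intro t
    induction t with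
    | zero => simpa using hxi0
    | succ t ih =>
      intro j
      rw [hx]
      have h2 : ‖∑ k ∈ Finset.univ.filter (fun k => c k = c j), Atr t j k • x t k‖
          ≤ (1+α')^t := by
        calc ‖∑ k ∈ Finset.univ.filter (fun k => c k = c j), Atr t j k • x t k‖
            ≤ ∑ k ∈ Finset.univ.filter (fun k => c k = c j), ‖Atr t j k • x t k‖ :=
              norm_sum_le _ _
          _ ≤ ∑ k ∈ Finset.univ.filter (fun k => c k = c j), Atr t j k * (1+α')^t := by
              refine Finset.sum_le_sum fun k _ => ?_
              rw [norm_smul, Real.norm_eq_abs, abs_of_nonneg (hAtrnn t j k)]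
              exact mul_le_mul_of_nonneg_left (ih k) (hAtrnn t j k)
          _ = (1+α')^t := by rw [← Finset.sum_mul, hAtrsum, one_mul]
      have h1 : ‖x t j + α' • ∑ k ∈ Finset.univ.filter (fun k => c k = c j), Atr t j k • x t k‖
          ≤ ‖x t j‖ + α' * (1+α')^t := by
        refine (norm_add_le _ _).trans ?_
        rw [norm_smul, Real.norm_eq_abs, abs_of_nonneg hα'0]
        exact add_le_add (le_refl _) (mul_le_mul_of_nonneg_left h2 hα'0)
      have := ih j
      calc ‖x t j + α' • ∑ k ∈ Finset.univ.filter (fun k => c k = c j), Atr t j k • x t k‖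
          ≤ ‖x t j‖ + α' * (1+α')^t := h1
        _ ≤ (1+α')^t + α' * (1+α')^t := by linarith
        _ = (1+α')^(t+1) := by ring
  have hxtb : ∀ t, ‖xt t‖ ≤ (1+α')^t := by
    intro t
    induction t with
    | zero => simpa using hx0
    | succ t ih =>
      rw [hxt]
      have h2 : ‖∑ i, A t i • x t i‖ ≤ (1+α')^t := by
        calc ‖∑ i, A t i • x t i‖ ≤ ∑ i, ‖A t i • x t i‖ := norm_sum_le _ _
          _ ≤ ∑ i, A t i * (1+α')^t := by
              refine Finset.sum_le_sum fun i _ => ?_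
              rw [norm_smul, Real.norm_eq_abs, abs_of_nonneg (hAnn t i)]
              exact mul_le_mul_of_nonneg_left (hxb t i) (hAnn t i)
          _ = (1+α')^t := by rw [← Finset.sum_mul, hAsum, one_mul]
      calc ‖xt t + α' • ∑ i, A t i • x t i‖
          ≤ ‖xt t‖ + α' * ‖∑ i, A t i • x t i‖ := by
            refine (norm_add_le _ _).trans ?_
            rw [norm_smul, Real.norm_eq_abs, abs_of_nonneg hα'0]
        _ ≤ (1+α')^t + α' * (1+α')^t := by
            have := mul_le_mul_of_nonneg_left h2 hα'0
            linarith
        _ = (1+α')^(t+1) := by ring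
  -- cross inner product lower bound
  have hcross : ∀ t (i k : Fin n), -(1+α')^(2*t) ≤ ⟪x t i, x t k⟫ := by
    intro t i k
    have h1 : |⟪x t i, x t k⟫| ≤ ‖x t i‖ * ‖x t k‖ := abs_real_inner_le_norm _ _
    have h2 : ‖x t i‖ * ‖x t k‖ ≤ (1+α')^(2*t) := by
      have := mul_le_mul (hxb t i) (hxb t k) (norm_nonneg _) (by positivity)
      calc ‖x t i‖ * ‖x t k‖ ≤ (1+α')^t * (1+α')^t := this
        _ = (1+α')^(2*t) := by rw [← pow_add]; ring_nf
    nlinarith [neg_abs_le (⟪x t i, x t k⟫ : ℝ)]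
  intro t
  set S := Finset.univ.filter (fun i => c i = cstar) with hSdef
  set B := R t + α' * (p cstar t * ρ t - (1 - p cstar t) * (1+α')^(2*t)) with hBdef
  -- step 1 : key inequality
  have hkey : ∀ k ∈ S, B ≤ ⟪xt (t+1), x t k⟫ := by
    intro k hk
    have hexp : ⟪xt (t+1), x t k⟫ = ⟪xt t, x t k⟫ + α' * ∑ i, A t i * ⟪x t i, x t k⟫ := by
      rw [hxt, inner_add_left, real_inner_smul_left, sum_inner]
      simp only [real_inner_smul_left]
    have h1 : R t ≤ ⟪xt t, x t k⟫ := by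
      rw [hR]; exact Finset.inf'_le _ hk
    have hsplit : ∑ i, A t i * ⟪x t i, x t k⟫ =
        ∑ i ∈ Finset.univ.filter (fun i => c i = cstar), A t i * ⟪x t i, x t k⟫ +
        ∑ i ∈ Finset.univ.filter (fun i => ¬ c i = cstar), A t i * ⟪x t i, x t k⟫ :=
      (Finset.sum_filter_add_sum_filter_not _ _ _).symm
    have hqsum : p cstar t + ∑ i ∈ Finset.univ.filter (fun i => ¬ c i = cstar), A t i = 1 := by
      rw [hp]
      rw [Finset.sum_filter_add_sum_filter_not]
      exact hAsum t
    have hS1 : p cstar t * ρ t ≤ ∑ i ∈ Finset.univ.filter (fun i => c i = cstar),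
        A t i * ⟪x t i, x t k⟫ := by
      rw [hp, Finset.sum_mul]
      refine Finset.sum_le_sum fun i hi => ?_
      refine mul_le_mul_of_nonneg_left ?_ (hAnn t i)
      rw [hρ]
      apply Finset.inf'_le (b := ((i, k) : Fin n × Fin n))
      simp only [Finset.mem_product]
      exact ⟨hi, hk⟩
    have hS2 : -((1 - p cstar t) * (1+α')^(2*t)) ≤
        ∑ i ∈ Finset.univ.filter (fun i => ¬ c i = cstar), A t i * ⟪x t i, x t k⟫ := by
      have : ∀ i ∈ Finset.univ.filter (fun i => ¬ c i = cstar),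
          A t i * (-(1+α')^(2*t)) ≤ A t i * ⟪x t i, x t k⟫ :=
        fun i _ => mul_le_mul_of_nonneg_left (hcross t i k) (hAnn t i)
      have hsum := Finset.sum_le_sum this
      rw [← Finset.sum_mul] at hsum
      have h1p : (1 - p cstar t) = ∑ i ∈ Finset.univ.filter (fun i => ¬ c i = cstar), A t i := by
        linarith
      rw [h1p]
      nlinarith [hsum]
    rw [hexp, hsplit, hBdef]
    have hfin : p cstar t * ρ t - (1 - p cstar t) * (1+α')^(2*t) ≤
        ∑ i ∈ Finset.univ.filter (fun i => c i = cstar), A t i * ⟪x t i, x t k⟫ +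
        ∑ i ∈ Finset.univ.filter (fun i => ¬ c i = cstar), A t i * ⟪x t i, x t k⟫ := by
      linarith
    nlinarith [mul_le_mul_of_nonneg_left hfin hα'0]
  -- step 2 : conclude
  have hBeq : (1 + α') * R t +
      α' * (1 + α') * (p cstar t * ρ t - (1 - p cstar t) * (1 + α') ^ (2 * t)) =
      (1 + α') * B := by rw [hBdef]; ring
  rw [hBeq, hR]
  apply Finset.le_inf'
  intro j hj
  have hcj : c j = cstar := by
    have := (Finset.mem_filter.mp hj).2
    exact this
  have hfe : Finset.univ.filter (fun k => c k = c j) = S := by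
    rw [hSdef, hcj]
  have hexp : ⟪xt (t+1), x (t+1) j⟫ =
      ⟪xt (t+1), x t j⟫ + α' * ∑ k ∈ S, Atr t j k * ⟪xt (t+1), x t k⟫ := by
    rw [hx, hfe, inner_add_right, real_inner_smul_right, inner_sum]
    simp only [real_inner_smul_right]
  have hAtrS : ∑ k ∈ S, Atr t j k = 1 := by rw [← hfe]; exact hAtrsum t j
  have hsum : B ≤ ∑ k ∈ S, Atr t j k * ⟪xt (t+1), x t k⟫ := by
    calc B = ∑ k ∈ S, Atr t j k * B := by rw [← Finset.sum_mul, hAtrS, one_mul]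
      _ ≤ ∑ k ∈ S, Atr t j k * ⟪xt (t+1), x t k⟫ :=
        Finset.sum_le_sum fun k hk => mul_le_mul_of_nonneg_left (hkey k hk) (hAtrnn t j k)
  have hj2 : B ≤ ⟪xt (t+1), x t j⟫ := hkey j hj
  rw [hexp]
  nlinarith [mul_le_mul_of_nonneg_left hsum hα'0]
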